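/- In the example Ω := ∪_{k≥0} Ω_k ⊂ ℝ², where Ω₀ is the unit square with lower-left corner at the origin and Ω_k ⊂ I_k (the unit square with lower-left corner at (2k,0)) is the k-th stage of the 4-corners Cantor construction (4^k squares of side 4^{-k} positioned in corners), the boundary ∂Ω is 1-dimensional Ahlfors–David regular: there exist constants 0 < c ≤ C < ∞ such that c r ≤ H^1(B(x,r) ∩ ∂Ω) ≤ C r for all x ∈ ∂Ω and 0 < r < diam(∂Ω). -/

import Mathlib

open Metric MeasureTheory Set
open scoped NNReal ENNReal

noncomputable section

/-- The lower-left corners of the four corner squares (relative positions, for squares of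
side `1/4` inside a unit square). -/
def cornerOffset : Fin 4 → ℝ × ℝ := ![(0, 0), (3/4, 0), (0, 3/4), (3/4, 3/4)]

/-- The contraction placing a unit-square configuration into a corner subsquare of side 1/4. -/
def cornerMap (i : Fin 4) (p : ℝ × ℝ) : ℝ × ℝ :=
  (p.1 / 4 + (cornerOffset i).1, p.2 / 4 + (cornerOffset i).2)

/-- `stage k` is the k-th stage of the 4-corners Cantor construction inside the (open) unit
square: `stage 0` is the open unit square, and `stage (k+1)` is the union of the four images
of `stage k` under the corner contractions. -/
def stage : ℕ → Set (ℝ × ℝ)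
  | 0 => Set.Ioo (0:ℝ) 1 ×ˢ Set.Ioo (0:ℝ) 1
  | k + 1 => ⋃ i : Fin 4, cornerMap i '' stage k

/-- The domain `Ω = ∪_k Ω_k`, where `Ω_k` is the k-th stage of the 4-corners construction
translated so as to sit inside the unit square `I_k` with lower-left corner `(2k,0)`. -/
def fourCornersDomain : Set (ℝ × ℝ) :=
  ⋃ k : ℕ, (fun p : ℝ × ℝ => (p.1 + 2 * (k : ℝ), p.2)) '' stage k

/-! ### Affine homeomorphisms -/

/-- The affine map `p ↦ (a p₁ + b, a p₂ + c)` as a homeomorphism of `ℝ × ℝ`, for `a ≠ 0`. -/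
def affHomeo (a b c : ℝ) (ha : a ≠ 0) : (ℝ × ℝ) ≃ₜ (ℝ × ℝ) where
  toFun p := (a * p.1 + b, a * p.2 + c)
  invFun p := ((p.1 - b) / a, (p.2 - c) / a)
  left_inv p := by simp [ha]
  right_inv p := by refine Prod.ext ?_ ?_ <;> field_simp <;> ring
  continuous_toFun := by fun_prop
  continuous_invFun := by fun_prop

lemma affHomeo_apply (a b c : ℝ) (ha : a ≠ 0) (p : ℝ × ℝ) :
    affHomeo a b c ha p = (a * p.1 + b, a * p.2 + c) := rfl

lemma affHomeo_dist (a b c : ℝ) (ha : a ≠ 0) (p q : ℝ × ℝ) :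
    dist (affHomeo a b c ha p) (affHomeo a b c ha q) = |a| * dist p q := by
  simp only [affHomeo_apply, Prod.dist_eq, Real.dist_eq]
  have h1 : a * p.1 + b - (a * q.1 + b) = a * (p.1 - q.1) := by ring
  have h2 : a * p.2 + c - (a * q.2 + c) = a * (p.2 - q.2) := by ring
  rw [h1, h2, abs_mul, abs_mul]
  rcases le_total |p.1 - q.1| |p.2 - q.2| with h | h
  · rw [max_eq_right h, max_eq_right (by nlinarith [abs_nonneg a] : |a| * |p.1 - q.1| ≤ |a| * |p.2 - q.2|)]
  · rw [max_eq_left h, max_eq_left (by nlinarith [abs_nonneg a] : |a| * |p.2 - q.2| ≤ |a| * |p.1 - q.1|)]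

/-- image of a ball intersected with a set. -/
lemma affHomeo_image_ball_inter (a b c : ℝ) (ha : 0 < a) (z : ℝ × ℝ) (R : ℝ) (s : Set (ℝ × ℝ)) :
    (affHomeo a b c ha.ne') '' (ball z R ∩ s) =
      ball ((affHomeo a b c ha.ne') z) (a * R) ∩ (affHomeo a b c ha.ne') '' s := by
  set e := affHomeo a b c ha.ne'
  ext y
  constructor
  · rintro ⟨w, ⟨hw1, hw2⟩, rfl⟩
    refine ⟨?_, w, hw2, rfl⟩
    rw [mem_ball, affHomeo_dist, abs_of_pos ha]
    exact (mul_lt_mul_iff_right₀ ha).2 hw1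
  · rintro ⟨hy, w, hw, rfl⟩
    refine ⟨w, ⟨?_, hw⟩, rfl⟩
    rw [mem_ball] at hy ⊢
    rw [affHomeo_dist, abs_of_pos ha] at hy
    exact lt_of_mul_lt_mul_left hy ha.le

lemma affHomeo_hausdorff_image (a b c : ℝ) (ha : 0 < a) (s : Set (ℝ × ℝ)) :
    μH[1] ((affHomeo a b c ha.ne') '' s) = ENNReal.ofReal a * μH[1] s := by
  set e := affHomeo a b c ha.ne'
  have hcoe : ((a.toNNReal : ℝ≥0) : ℝ) = a := Real.coe_toNNReal a ha.le
  have hK : LipschitzWith a.toNNReal e := by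
    apply LipschitzWith.of_dist_le_mul
    intro p q
    rw [affHomeo_dist, abs_of_pos ha, hcoe]
  have hA : AntilipschitzWith a.toNNReal⁻¹ e := by
    apply AntilipschitzWith.of_le_mul_dist
    intro p q
    rw [affHomeo_dist, abs_of_pos ha, NNReal.coe_inv, hcoe]
    rw [inv_mul_eq_div, le_div_iff₀ ha, mul_comm]
  have h1 := hK.hausdorffMeasure_image_le (zero_le_one) s
  have h2 := hA.le_hausdorffMeasure_image (zero_le_one) s
  rw [ENNReal.rpow_one] at h1 h2
  have hae : (ENNReal.ofReal a) = ((a.toNNReal : ℝ≥0) : ℝ≥0∞) := rfl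
  rw [hae]
  refine le_antisymm h1 ?_
  have hane : ((a.toNNReal : ℝ≥0) : ℝ≥0∞) ≠ 0 := by
    simp [← NNReal.coe_eq_zero, hcoe, ha.ne']
  have hane' : ((a.toNNReal : ℝ≥0) : ℝ≥0∞) ≠ ⊤ := ENNReal.coe_ne_top
  rw [ENNReal.coe_inv (by simp [← NNReal.coe_eq_zero, hcoe, ha.ne'])] at h2
  calc ((a.toNNReal : ℝ≥0) : ℝ≥0∞) * μH[1] s
      ≤ ((a.toNNReal : ℝ≥0) : ℝ≥0∞) * (((a.toNNReal : ℝ≥0) : ℝ≥0∞)⁻¹ * μH[1] (e '' s)) := by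
        gcongr
    _ = μH[1] (e '' s) := by
        rw [← mul_assoc, ENNReal.mul_inv_cancel hane hane', one_mul]

/-! ### Corner maps, stages, frontier recursion -/

def cornerHomeo (i : Fin 4) : (ℝ × ℝ) ≃ₜ (ℝ × ℝ) :=
  affHomeo (1/4) (cornerOffset i).1 (cornerOffset i).2 (by norm_num)

lemma cornerMap_eq (i : Fin 4) : cornerMap i = ⇑(cornerHomeo i) := by
  funext p
  simp only [cornerMap, cornerHomeo, affHomeo_apply, Prod.mk.injEq]
  constructor <;> ring

lemma cornerOffset_cases (i : Fin 4) :
    ((cornerOffset i).1 = 0 ∨ (cornerOffset i).1 = 3/4) ∧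
    ((cornerOffset i).2 = 0 ∨ (cornerOffset i).2 = 3/4) := by
  fin_cases i <;> simp [cornerOffset]

/-- The closed corner square containing the `i`-th corner copy. -/
def cornerSq (i : Fin 4) : Set (ℝ × ℝ) :=
  Icc (cornerOffset i).1 ((cornerOffset i).1 + 1/4) ×ˢ
    Icc (cornerOffset i).2 ((cornerOffset i).2 + 1/4)

def USq : Set (ℝ × ℝ) := Ioo (0:ℝ) 1 ×ˢ Ioo (0:ℝ) 1
def UC : Set (ℝ × ℝ) := Icc (0:ℝ) 1 ×ˢ Icc (0:ℝ) 1

lemma cornerMap_mem_cornerSq {i : Fin 4} {p : ℝ × ℝ} (hp : p ∈ UC) :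
    cornerMap i p ∈ cornerSq i := by
  obtain ⟨⟨h1, h2⟩, h3, h4⟩ := hp
  exact ⟨⟨by simp [cornerMap]; linarith, by simp [cornerMap]; linarith⟩,
         ⟨by simp [cornerMap]; linarith, by simp [cornerMap]; linarith⟩⟩

lemma cornerMap_mem_USq {i : Fin 4} {p : ℝ × ℝ} (hp : p ∈ USq) :
    cornerMap i p ∈ USq := by
  obtain ⟨⟨h1, h2⟩, h3, h4⟩ := hp
  obtain ⟨ho1, ho2⟩ := cornerOffset_cases i
  constructor
  · rcases ho1 with h | h <;> rw [show (cornerMap i p).1 = p.1/4 + (cornerOffset i).1 from rfl, h] <;>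
      constructor <;> linarith
  · rcases ho2 with h | h <;> rw [show (cornerMap i p).2 = p.2/4 + (cornerOffset i).2 from rfl, h] <;>
      constructor <;> linarith

lemma stage_subset_USq : ∀ k, stage k ⊆ USq := by
  intro k
  induction k with
  | zero => exact fun p hp => hp
  | succ k ih =>
    rintro p hp
    simp only [stage, mem_iUnion] at hp
    obtain ⟨i, q, hq, rfl⟩ := hp
    exact cornerMap_mem_USq (ih hq)

lemma USq_subset_UC : USq ⊆ UC :=
  Set.prod_mono Set.Ioo_subset_Icc_self Set.Ioo_subset_Icc_self

lemma isClosed_UC : IsClosed UC := IsClosed.prod isClosed_Icc isClosed_Icc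

lemma closure_stage_subset_UC (k : ℕ) : closure (stage k) ⊆ UC :=
  closure_minimal ((stage_subset_USq k).trans USq_subset_UC) isClosed_UC

lemma frontier_stage_subset_UC (k : ℕ) : frontier (stage k) ⊆ UC :=
  (frontier_subset_closure).trans (closure_stage_subset_UC k)

lemma stage_isOpen : ∀ k, IsOpen (stage k) := by
  intro k
  induction k with
  | zero => exact (isOpen_Ioo).prod isOpen_Ioo
  | succ k ih =>
    apply isOpen_iUnion
    intro i
    rw [cornerMap_eq]
    exact (Homeomorph.isOpen_image _).2 ih

lemma sep_fst {p q : ℝ × ℝ} (h : p.1 ≤ 1/4) (h' : 3/4 ≤ q.1) : (2:ℝ)⁻¹ ≤ dist p q := by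
  rw [show (2:ℝ)⁻¹ = 1/2 by norm_num]
  have h2 : (1/2:ℝ) ≤ dist p.1 q.1 := by
    rw [Real.dist_eq, abs_sub_comm]
    calc (1/2:ℝ) ≤ q.1 - p.1 := by linarith
      _ ≤ |q.1 - p.1| := le_abs_self _
  calc (1/2:ℝ) ≤ dist p.1 q.1 := h2
    _ ≤ max (dist p.1 q.1) (dist p.2 q.2) := le_max_left _ _
    _ = dist p q := Prod.dist_eq.symm

lemma sep_snd {p q : ℝ × ℝ} (h : p.2 ≤ 1/4) (h' : 3/4 ≤ q.2) : (2:ℝ)⁻¹ ≤ dist p q := by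
  rw [show (2:ℝ)⁻¹ = 1/2 by norm_num]
  have h2 : (1/2:ℝ) ≤ dist p.2 q.2 := by
    rw [Real.dist_eq, abs_sub_comm]
    calc (1/2:ℝ) ≤ q.2 - p.2 := by linarith
      _ ≤ |q.2 - p.2| := le_abs_self _
  calc (1/2:ℝ) ≤ dist p.2 q.2 := h2
    _ ≤ max (dist p.1 q.1) (dist p.2 q.2) := le_max_right _ _
    _ = dist p q := Prod.dist_eq.symm

lemma cornerSq_sep : ∀ i j : Fin 4, i ≠ j → ∀ p ∈ cornerSq i, ∀ q ∈ cornerSq j,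
    (1/2:ℝ) ≤ dist p q := by
  intro i j hij p hp q hq
  obtain ⟨⟨hp1, hp2⟩, hp3, hp4⟩ := hp
  obtain ⟨⟨hq1, hq2⟩, hq3, hq4⟩ := hq
  fin_cases i <;> fin_cases j <;> simp_all [cornerOffset] <;>
    first
      | (refine sep_fst ?_ ?_ <;> linarith)
      | (refine sep_snd ?_ ?_ <;> linarith)
      | (rw [dist_comm]; first
          | (refine sep_fst ?_ ?_ <;> linarith)
          | (refine sep_snd ?_ ?_ <;> linarith))

lemma cornerSq_disjoint {i j : Fin 4} (hij : i ≠ j) : Disjoint (cornerSq i) (cornerSq j) := by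
  rw [Set.disjoint_left]
  intro p hpi hpj
  have h := cornerSq_sep i j hij p hpi p hpj
  rw [dist_self] at h
  linarith

lemma frontier_stage_succ (k : ℕ) :
    frontier (stage (k+1)) = ⋃ i : Fin 4, cornerMap i '' frontier (stage k) := by
  have hopen := stage_isOpen k
  have hcl : ∀ i : Fin 4, closure (cornerMap i '' stage k) = cornerMap i '' closure (stage k) := by
    intro i
    rw [cornerMap_eq]
    exact ((cornerHomeo i).image_closure (stage k)).symm
  have himgQ : ∀ i : Fin 4, cornerMap i '' closure (stage k) ⊆ cornerSq i := by
    intro i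
    rintro p ⟨q, hq, rfl⟩
    exact cornerMap_mem_cornerSq (closure_stage_subset_UC k hq)
  have hinj : ∀ i : Fin 4, Function.Injective (cornerMap i) := by
    intro i
    rw [cornerMap_eq]
    exact (cornerHomeo i).injective
  rw [(stage_isOpen (k+1)).frontier_eq]
  show closure (⋃ i : Fin 4, cornerMap i '' stage k) \ (⋃ i : Fin 4, cornerMap i '' stage k) = _
  rw [closure_iUnion_of_finite]
  ext x
  simp only [mem_diff, mem_iUnion, not_exists]
  constructor
  · rintro ⟨⟨i, hxi⟩, hx2⟩
    refine ⟨i, ?_⟩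
    rw [hcl i] at hxi
    have : x ∈ cornerMap i '' (closure (stage k) \ stage k) := by
      rw [Set.image_diff (hinj i)]
      exact ⟨hxi, fun h => hx2 i h⟩
    rwa [← hopen.frontier_eq] at this
  · rintro ⟨i, hxi⟩
    rw [hopen.frontier_eq, Set.image_diff (hinj i)] at hxi
    obtain ⟨hx1, hx2⟩ := hxi
    constructor
    · exact ⟨i, by rw [hcl i]; exact hx1⟩
    · intro j hj
      rcases eq_or_ne j i with rfl | hne
      · exact hx2 hj
      · have hxQi : x ∈ cornerSq i := himgQ i hx1
        have hxQj : x ∈ cornerSq j := by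
          apply himgQ j
          exact Set.image_mono subset_closure hj
        exact absurd hxQi (Set.disjoint_left.1 (cornerSq_disjoint hne) hxQj)

/-! ### Measure of the stage frontiers -/

lemma quarter_pos : (0:ℝ) < 1/4 := by norm_num

lemma cornerHomeo_eq (i : Fin 4) :
    cornerHomeo i = affHomeo (1/4) (cornerOffset i).1 (cornerOffset i).2 quarter_pos.ne' := rfl

lemma cornerMap_hausdorff_image (i : Fin 4) (s : Set (ℝ × ℝ)) :
    μH[1] (cornerMap i '' s) = ENNReal.ofReal (1/4) * μH[1] s := by
  rw [cornerMap_eq, cornerHomeo_eq]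
  exact affHomeo_hausdorff_image (1/4) _ _ quarter_pos s

lemma cornerMap_image_ball_inter (i : Fin 4) (z : ℝ × ℝ) (R : ℝ) (s : Set (ℝ × ℝ)) :
    cornerMap i '' (ball z R ∩ s) = ball (cornerMap i z) (R/4) ∩ cornerMap i '' s := by
  rw [cornerMap_eq, cornerHomeo_eq]
  have := affHomeo_image_ball_inter (1/4) (cornerOffset i).1 (cornerOffset i).2 quarter_pos z R s
  rw [show (1/4 : ℝ) * R = R/4 by ring] at this
  exact this

lemma isCompact_frontier_stage (k : ℕ) : IsCompact (frontier (stage k)) :=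
  IsCompact.of_isClosed_subset (IsCompact.prod isCompact_Icc isCompact_Icc)
    isClosed_frontier (frontier_stage_subset_UC k)

lemma measurable_frontier_stage (k : ℕ) : MeasurableSet (frontier (stage k)) :=
  isClosed_frontier.measurableSet

lemma continuous_cornerMap (i : Fin 4) : Continuous (cornerMap i) := by
  rw [cornerMap_eq]; exact (cornerHomeo i).continuous

lemma isometry_horiz (c : ℝ) : Isometry (fun t : ℝ => ((t, c) : ℝ × ℝ)) :=
  Isometry.of_dist_eq (by intro a b; simp [Prod.dist_eq, dist_nonneg])

lemma isometry_vert (c : ℝ) : Isometry (fun t : ℝ => ((c, t) : ℝ × ℝ)) :=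
  Isometry.of_dist_eq (by intro a b; simp [Prod.dist_eq, dist_nonneg])

lemma H1_horiz (c : ℝ) (s : Set ℝ) :
    μH[1] ((fun t : ℝ => ((t, c) : ℝ × ℝ)) '' s) = volume s := by
  rw [(isometry_horiz c).hausdorffMeasure_image (Or.inl zero_le_one),
    MeasureTheory.hausdorffMeasure_real]

lemma H1_vert (c : ℝ) (s : Set ℝ) :
    μH[1] ((fun t : ℝ => ((c, t) : ℝ × ℝ)) '' s) = volume s := by
  rw [(isometry_vert c).hausdorffMeasure_image (Or.inl zero_le_one),
    MeasureTheory.hausdorffMeasure_real]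

lemma seg_horiz_eq (c : ℝ) (s : Set ℝ) :
    s ×ˢ ({c} : Set ℝ) = (fun t : ℝ => ((t, c) : ℝ × ℝ)) '' s := by
  ext ⟨a, b⟩
  simp only [Set.mem_prod, Set.mem_singleton_iff, Set.mem_image, Prod.mk.injEq]
  constructor
  · rintro ⟨h1, rfl⟩; exact ⟨a, h1, rfl, rfl⟩
  · rintro ⟨t, ht, rfl, rfl⟩; exact ⟨ht, rfl⟩

lemma seg_vert_eq (c : ℝ) (s : Set ℝ) :
    ({c} : Set ℝ) ×ˢ s = (fun t : ℝ => ((c, t) : ℝ × ℝ)) '' s := by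
  ext ⟨a, b⟩
  simp only [Set.mem_prod, Set.mem_singleton_iff, Set.mem_image, Prod.mk.injEq]
  constructor
  · rintro ⟨rfl, h1⟩; exact ⟨b, h1, rfl, rfl⟩
  · rintro ⟨t, ht, rfl, rfl⟩; exact ⟨rfl, ht⟩

lemma mem_frontier_stage_zero {p : ℝ × ℝ} :
    p ∈ frontier (stage 0) ↔ p ∈ UC ∧ (p.1 = 0 ∨ p.1 = 1 ∨ p.2 = 0 ∨ p.2 = 1) := by
  rw [(stage_isOpen 0).frontier_eq]
  have hcl : closure (stage 0) = UC := by
    show closure (Ioo (0:ℝ) 1 ×ˢ Ioo (0:ℝ) 1) = UC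
    rw [closure_prod_eq, closure_Ioo (by norm_num : (0:ℝ) ≠ 1)]
    rfl
  rw [hcl]
  constructor
  · rintro ⟨hUC, hn⟩
    refine ⟨hUC, ?_⟩
    obtain ⟨⟨h1, h2⟩, h3, h4⟩ := hUC
    by_contra hc
    push_neg at hc
    obtain ⟨n1, n2, n3, n4⟩ := hc
    exact hn ⟨⟨h1.lt_of_ne (Ne.symm n1), h2.lt_of_ne n2⟩, h3.lt_of_ne (Ne.symm n3), h4.lt_of_ne n4⟩
  · rintro ⟨hUC, hor⟩
    refine ⟨hUC, ?_⟩
    rintro ⟨⟨i1, i2⟩, i3, i4⟩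
    rcases hor with h | h | h | h <;> linarith

lemma frontier_stage_zero_eq :
    frontier (stage 0) =
      (Icc (0:ℝ) 1 ×ˢ ({0} : Set ℝ)) ∪ ((Icc (0:ℝ) 1 ×ˢ ({1} : Set ℝ)) ∪
        ((({0} : Set ℝ) ×ˢ Ioo (0:ℝ) 1) ∪ (({1} : Set ℝ) ×ˢ Ioo (0:ℝ) 1))) := by
  ext p
  rw [mem_frontier_stage_zero]
  simp only [Set.mem_union, Set.mem_prod, Set.mem_singleton_iff, Set.mem_Icc, Set.mem_Ioo]
  constructor
  · rintro ⟨⟨⟨h1, h2⟩, h3, h4⟩, hor⟩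
    by_cases hb : p.2 = 0
    · exact Or.inl ⟨⟨h1, h2⟩, hb⟩
    by_cases ht : p.2 = 1
    · exact Or.inr (Or.inl ⟨⟨h1, h2⟩, ht⟩)
    have hIoo : 0 < p.2 ∧ p.2 < 1 := ⟨h3.lt_of_ne (Ne.symm hb), h4.lt_of_ne ht⟩
    rcases hor with h | h | h | h
    · exact Or.inr (Or.inr (Or.inl ⟨h, hIoo⟩))
    · exact Or.inr (Or.inr (Or.inr ⟨h, hIoo⟩))
    · exact absurd h hb
    · exact absurd h ht
  · rintro (⟨⟨h1, h2⟩, h3⟩ | ⟨⟨h1, h2⟩, h3⟩ | ⟨h1, h2, h3⟩ | ⟨h1, h2, h3⟩)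
    · exact ⟨⟨⟨h1, h2⟩, by rw [h3]; constructor <;> norm_num⟩, Or.inr (Or.inr (Or.inl h3))⟩
    · exact ⟨⟨⟨h1, h2⟩, by rw [h3]; constructor <;> norm_num⟩, Or.inr (Or.inr (Or.inr h3))⟩
    · exact ⟨⟨by rw [h1]; constructor <;> norm_num, le_of_lt h2, le_of_lt h3⟩, Or.inl h1⟩
    · exact ⟨⟨by rw [h1]; constructor <;> norm_num, le_of_lt h2, le_of_lt h3⟩, Or.inr (Or.inl h1)⟩

lemma measure_frontier_stage_zero : μH[1] (frontier (stage 0)) = 4 := by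
  rw [frontier_stage_zero_eq]
  have mB : MeasurableSet (Icc (0:ℝ) 1 ×ˢ ({1} : Set ℝ)) :=
    measurableSet_Icc.prod (measurableSet_singleton 1)
  have mL : MeasurableSet ((({0} : Set ℝ)) ×ˢ Ioo (0:ℝ) 1) :=
    (measurableSet_singleton 0).prod measurableSet_Ioo
  have mR : MeasurableSet ((({1} : Set ℝ)) ×ˢ Ioo (0:ℝ) 1) :=
    (measurableSet_singleton 1).prod measurableSet_Ioo
  have d1 : Disjoint (Icc (0:ℝ) 1 ×ˢ ({0} : Set ℝ))
      ((Icc (0:ℝ) 1 ×ˢ ({1} : Set ℝ)) ∪ ((({0} : Set ℝ) ×ˢ Ioo (0:ℝ) 1) ∪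
        (({1} : Set ℝ) ×ˢ Ioo (0:ℝ) 1))) := by
    rw [Set.disjoint_left]
    rintro p ⟨_, hp2⟩ (⟨_, hq2⟩ | ⟨_, hq2, _⟩ | ⟨_, hq2, _⟩) <;>
      simp only [Set.mem_singleton_iff] at hp2 <;> rw [hp2] at hq2 <;> norm_num at hq2
  have d2 : Disjoint (Icc (0:ℝ) 1 ×ˢ ({1} : Set ℝ))
      ((({0} : Set ℝ) ×ˢ Ioo (0:ℝ) 1) ∪ (({1} : Set ℝ) ×ˢ Ioo (0:ℝ) 1)) := by
    rw [Set.disjoint_left]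
    rintro p ⟨_, hp2⟩ (⟨_, _, hq2⟩ | ⟨_, _, hq2⟩) <;>
      simp only [Set.mem_singleton_iff] at hp2 <;> rw [hp2] at hq2 <;> norm_num at hq2
  have d3 : Disjoint ((({0} : Set ℝ)) ×ˢ Ioo (0:ℝ) 1) ((({1} : Set ℝ)) ×ˢ Ioo (0:ℝ) 1) := by
    rw [Set.disjoint_left]
    rintro p ⟨hp1, _⟩ ⟨hq1, _⟩
    simp only [Set.mem_singleton_iff] at hp1 hq1
    rw [hp1] at hq1; norm_num at hq1
  rw [measure_union d1 (mB.union (mL.union mR)), measure_union d2 (mL.union mR),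
    measure_union d3 mR]
  rw [seg_horiz_eq, seg_horiz_eq, seg_vert_eq, seg_vert_eq, H1_horiz, H1_horiz, H1_vert, H1_vert,
    Real.volume_Icc, Real.volume_Ioo]
  norm_num

lemma measure_frontier_stage (k : ℕ) : μH[1] (frontier (stage k)) = 4 := by
  induction k with
  | zero => exact measure_frontier_stage_zero
  | succ k ih =>
    rw [frontier_stage_succ]
    have hdisj : Pairwise (Function.onFun Disjoint (fun i : Fin 4 => cornerMap i '' frontier (stage k))) := by
      intro i j hij
      apply Set.disjoint_of_subset ?_ ?_ (cornerSq_disjoint hij)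
      · rintro p ⟨q, hq, rfl⟩
        exact cornerMap_mem_cornerSq (frontier_stage_subset_UC k hq)
      · rintro p ⟨q, hq, rfl⟩
        exact cornerMap_mem_cornerSq (frontier_stage_subset_UC k hq)
    have hmeas : ∀ i : Fin 4, MeasurableSet (cornerMap i '' frontier (stage k)) := fun i =>
      (((isCompact_frontier_stage k).image (continuous_cornerMap i)).isClosed).measurableSet
    rw [measure_iUnion hdisj hmeas]
    rw [tsum_fintype]
    simp only [cornerMap_hausdorff_image, ih]
    rw [Finset.sum_const, Finset.card_univ, Fintype.card_fin]
    rw [nsmul_eq_mul]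
    rw [← ENNReal.ofReal_ofNat 4, ← ENNReal.ofReal_mul (by norm_num)]
    norm_num

/-! ### Single-stage ADR bounds -/

lemma UC_dist_le {p q : ℝ × ℝ} (hp : p ∈ UC) (hq : q ∈ UC) : dist p q ≤ 1 := by
  obtain ⟨⟨a1, a2⟩, a3, a4⟩ := hp
  obtain ⟨⟨b1, b2⟩, b3, b4⟩ := hq
  rw [Prod.dist_eq]
  apply max_le <;> rw [Real.dist_eq, abs_sub_le_iff] <;> constructor <;> linarith

lemma ball_inter_horiz_le (x : ℝ × ℝ) (r : ℝ) (c : ℝ) (s : Set ℝ) :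
    μH[1] (ball x r ∩ (s ×ˢ ({c} : Set ℝ))) ≤ ENNReal.ofReal (2 * r) := by
  have hsub : ball x r ∩ (s ×ˢ ({c} : Set ℝ)) ⊆
      (fun t : ℝ => ((t, c) : ℝ × ℝ)) '' Ioo (x.1 - r) (x.1 + r) := by
    rintro ⟨a, b⟩ ⟨hball, _, hb⟩
    simp only [Set.mem_singleton_iff] at hb
    subst hb
    refine ⟨a, ?_, rfl⟩
    rw [mem_ball, Prod.dist_eq] at hball
    have := (max_lt_iff.1 hball).1
    rw [Real.dist_eq, abs_sub_lt_iff] at this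
    exact ⟨by linarith [this.2], by linarith [this.1]⟩
  calc μH[1] (ball x r ∩ (s ×ˢ ({c} : Set ℝ)))
      ≤ μH[1] ((fun t : ℝ => ((t, c) : ℝ × ℝ)) '' Ioo (x.1 - r) (x.1 + r)) := measure_mono hsub
    _ = volume (Ioo (x.1 - r) (x.1 + r)) := H1_horiz c _
    _ = ENNReal.ofReal (2 * r) := by rw [Real.volume_Ioo]; congr 1; ring

lemma ball_inter_vert_le (x : ℝ × ℝ) (r : ℝ) (c : ℝ) (s : Set ℝ) :
    μH[1] (ball x r ∩ (({c} : Set ℝ) ×ˢ s)) ≤ ENNReal.ofReal (2 * r) := by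
  have hsub : ball x r ∩ (({c} : Set ℝ) ×ˢ s) ⊆
      (fun t : ℝ => ((c, t) : ℝ × ℝ)) '' Ioo (x.2 - r) (x.2 + r) := by
    rintro ⟨a, b⟩ ⟨hball, ha, _⟩
    simp only [Set.mem_singleton_iff] at ha
    subst ha
    refine ⟨b, ?_, rfl⟩
    rw [mem_ball, Prod.dist_eq] at hball
    have := (max_lt_iff.1 hball).2
    rw [Real.dist_eq, abs_sub_lt_iff] at this
    exact ⟨by linarith [this.2], by linarith [this.1]⟩
  calc μH[1] (ball x r ∩ (({c} : Set ℝ) ×ˢ s))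
      ≤ μH[1] ((fun t : ℝ => ((c, t) : ℝ × ℝ)) '' Ioo (x.2 - r) (x.2 + r)) := measure_mono hsub
    _ = volume (Ioo (x.2 - r) (x.2 + r)) := H1_vert c _
    _ = ENNReal.ofReal (2 * r) := by rw [Real.volume_Ioo]; congr 1; ring

lemma stage_upper : ∀ k : ℕ, ∀ (x : ℝ × ℝ) (r : ℝ), 0 < r →
    μH[1] (ball x r ∩ frontier (stage k)) ≤ ENNReal.ofReal (16 * r) := by
  intro k
  induction k with
  | zero =>
    intro x r hr
    rw [frontier_stage_zero_eq]
    rw [Set.inter_union_distrib_left, Set.inter_union_distrib_left,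
      Set.inter_union_distrib_left]
    calc μH[1] _
        ≤ μH[1] (ball x r ∩ (Icc (0:ℝ) 1 ×ˢ ({0} : Set ℝ))) +
            (μH[1] (ball x r ∩ (Icc (0:ℝ) 1 ×ˢ ({1} : Set ℝ))) +
              (μH[1] (ball x r ∩ (({0} : Set ℝ) ×ˢ Ioo (0:ℝ) 1)) +
                μH[1] (ball x r ∩ (({1} : Set ℝ) ×ˢ Ioo (0:ℝ) 1)))) := by
          refine (measure_union_le _ _).trans ?_
          gcongr
          refine (measure_union_le _ _).trans ?_
          gcongr
          exact measure_union_le _ _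
      _ ≤ ENNReal.ofReal (2*r) + (ENNReal.ofReal (2*r) +
            (ENNReal.ofReal (2*r) + ENNReal.ofReal (2*r))) := by
          gcongr
          · exact ball_inter_horiz_le x r 0 _
          · exact ball_inter_horiz_le x r 1 _
          · exact ball_inter_vert_le x r 0 _
          · exact ball_inter_vert_le x r 1 _
      _ ≤ ENNReal.ofReal (16 * r) := by
          rw [← ENNReal.ofReal_add (by linarith) (by linarith),
            ← ENNReal.ofReal_add (by linarith) (by linarith),
            ← ENNReal.ofReal_add (by linarith) (by linarith)]
          exact ENNReal.ofReal_le_ofReal (by linarith)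
  | succ k ih =>
    intro x r hr
    rcases le_or_gt (1/4) r with hr4 | hr4
    · calc μH[1] (ball x r ∩ frontier (stage (k+1)))
          ≤ μH[1] (frontier (stage (k+1))) := measure_mono Set.inter_subset_right
        _ = 4 := measure_frontier_stage _
        _ ≤ ENNReal.ofReal (16 * r) := by
            rw [show (4:ℝ≥0∞) = ENNReal.ofReal 4 by norm_num]
            exact ENNReal.ofReal_le_ofReal (by linarith)
    · by_cases hne : (ball x r ∩ frontier (stage (k+1))).Nonempty
      swap
      · rw [Set.not_nonempty_iff_eq_empty] at hne
        rw [hne]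
        simp
      obtain ⟨p, hpb, hpF⟩ := hne
      rw [frontier_stage_succ] at hpF
      rw [mem_iUnion] at hpF
      obtain ⟨i0, hp0⟩ := hpF
      have hpQ : p ∈ cornerSq i0 := by
        obtain ⟨w, hw, rfl⟩ := hp0
        exact cornerMap_mem_cornerSq (frontier_stage_subset_UC k hw)
      have hsub : ball x r ∩ frontier (stage (k+1)) ⊆
          ball x r ∩ cornerMap i0 '' frontier (stage k) := by
        rw [frontier_stage_succ]
        rintro y ⟨hyb, hyU⟩
        rw [mem_iUnion] at hyU
        obtain ⟨j, hyj⟩ := hyU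
        rcases eq_or_ne j i0 with rfl | hne2
        · exact ⟨hyb, hyj⟩
        · exfalso
          have hyQ : y ∈ cornerSq j := by
            obtain ⟨w, hw, rfl⟩ := hyj
            exact cornerMap_mem_cornerSq (frontier_stage_subset_UC k hw)
          have hsep := cornerSq_sep j i0 hne2 y hyQ p hpQ
          have hd : dist y p < 2 * r := by
            calc dist y p ≤ dist y x + dist x p := dist_triangle y x p
              _ < r + r := by
                  apply add_lt_add (mem_ball.1 hyb)
                  rw [dist_comm]; exact mem_ball.1 hpb
              _ = 2 * r := by ring
          linarith
      set z := (cornerHomeo i0).symm x with hz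
      have hxz : cornerMap i0 z = x := by
        rw [cornerMap_eq]
        exact (cornerHomeo i0).apply_symm_apply x
      have hsub2 : ball x r ∩ cornerMap i0 '' frontier (stage k) ⊆
          cornerMap i0 '' (ball z (4*r) ∩ frontier (stage k)) := by
        rintro y ⟨hyb, w, hw, rfl⟩
        refine ⟨w, ⟨?_, hw⟩, rfl⟩
        rw [mem_ball]
        have hd : dist (cornerMap i0 w) (cornerMap i0 z) = |1/4| * dist w z := by
          rw [cornerMap_eq, cornerHomeo_eq]
          exact affHomeo_dist _ _ _ _ w z
        rw [hxz] at hd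
        have h1 : dist (cornerMap i0 w) x < r := mem_ball.1 hyb
        rw [show |(1/4:ℝ)| = 1/4 by norm_num] at hd
        linarith
      calc μH[1] (ball x r ∩ frontier (stage (k+1)))
          ≤ μH[1] (cornerMap i0 '' (ball z (4*r) ∩ frontier (stage k))) :=
            measure_mono (hsub.trans hsub2)
        _ = ENNReal.ofReal (1/4) * μH[1] (ball z (4*r) ∩ frontier (stage k)) :=
            cornerMap_hausdorff_image i0 _
        _ ≤ ENNReal.ofReal (1/4) * ENNReal.ofReal (16 * (4*r)) := by
            gcongr
            exact ih z (4*r) (by linarith)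
        _ = ENNReal.ofReal (16 * r) := by
            rw [← ENNReal.ofReal_mul (by norm_num)]
            congr 1
            ring

lemma volume_aux {t r : ℝ} (h0 : 0 ≤ t) (h1 : t ≤ 1) (hr : 0 < r) (hr2 : r ≤ 2) :
    ENNReal.ofReal (r/2) ≤ volume (Ioo (max (t - r) 0) (min (t + r) 1)) := by
  rw [Real.volume_Ioo]
  apply ENNReal.ofReal_le_ofReal
  simp only [max_def, min_def]
  split_ifs <;> linarith

lemma lower_horiz (x : ℝ × ℝ) (hUC : x ∈ UC) (hc : x.2 = 0 ∨ x.2 = 1) {r : ℝ}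
    (hr : 0 < r) (hr2 : r ≤ 2) :
    ENNReal.ofReal (r/2) ≤ μH[1] (ball x r ∩ frontier (stage 0)) := by
  obtain ⟨⟨a1, a2⟩, a3, a4⟩ := hUC
  have hsub : (fun t : ℝ => ((t, x.2) : ℝ × ℝ)) '' Ioo (max (x.1 - r) 0) (min (x.1 + r) 1) ⊆
      ball x r ∩ frontier (stage 0) := by
    rintro p ⟨t, ⟨ht1, ht2⟩, rfl⟩
    have htIcc : 0 ≤ t ∧ t ≤ 1 :=
      ⟨le_of_lt (lt_of_le_of_lt (le_max_right _ _) ht1),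
       le_of_lt (lt_of_lt_of_le ht2 (min_le_right _ _))⟩
    constructor
    · rw [mem_ball, Prod.dist_eq]
      apply max_lt
      · rw [Real.dist_eq, abs_sub_lt_iff]
        constructor
        · linarith [lt_of_lt_of_le ht2 (min_le_left _ _)]
        · linarith [lt_of_le_of_lt (le_max_left _ _) ht1]
      · rw [dist_self]; exact hr
    · rw [mem_frontier_stage_zero]
      exact ⟨⟨htIcc, a3, a4⟩, Or.inr (Or.inr hc)⟩
  calc ENNReal.ofReal (r/2)
      ≤ volume (Ioo (max (x.1 - r) 0) (min (x.1 + r) 1)) := volume_aux a1 a2 hr hr2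
    _ = μH[1] ((fun t : ℝ => ((t, x.2) : ℝ × ℝ)) '' Ioo (max (x.1 - r) 0) (min (x.1 + r) 1)) :=
        (H1_horiz _ _).symm
    _ ≤ μH[1] (ball x r ∩ frontier (stage 0)) := measure_mono hsub

lemma lower_vert (x : ℝ × ℝ) (hUC : x ∈ UC) (hc : x.1 = 0 ∨ x.1 = 1) {r : ℝ}
    (hr : 0 < r) (hr2 : r ≤ 2) :
    ENNReal.ofReal (r/2) ≤ μH[1] (ball x r ∩ frontier (stage 0)) := by
  obtain ⟨⟨a1, a2⟩, a3, a4⟩ := hUC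
  have hsub : (fun t : ℝ => ((x.1, t) : ℝ × ℝ)) '' Ioo (max (x.2 - r) 0) (min (x.2 + r) 1) ⊆
      ball x r ∩ frontier (stage 0) := by
    rintro p ⟨t, ⟨ht1, ht2⟩, rfl⟩
    have htIcc : 0 ≤ t ∧ t ≤ 1 :=
      ⟨le_of_lt (lt_of_le_of_lt (le_max_right _ _) ht1),
       le_of_lt (lt_of_lt_of_le ht2 (min_le_right _ _))⟩
    constructor
    · rw [mem_ball, Prod.dist_eq]
      apply max_lt
      · rw [dist_self]; exact hr
      · rw [Real.dist_eq, abs_sub_lt_iff]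
        constructor
        · linarith [lt_of_lt_of_le ht2 (min_le_left _ _)]
        · linarith [lt_of_le_of_lt (le_max_left _ _) ht1]
    · rw [mem_frontier_stage_zero]
      rcases hc with h | h
      · exact ⟨⟨⟨a1, a2⟩, htIcc⟩, Or.inl h⟩
      · exact ⟨⟨⟨a1, a2⟩, htIcc⟩, Or.inr (Or.inl h)⟩
  calc ENNReal.ofReal (r/2)
      ≤ volume (Ioo (max (x.2 - r) 0) (min (x.2 + r) 1)) := volume_aux a3 a4 hr hr2
    _ = μH[1] ((fun t : ℝ => ((x.1, t) : ℝ × ℝ)) '' Ioo (max (x.2 - r) 0) (min (x.2 + r) 1)) :=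
        (H1_vert _ _).symm
    _ ≤ μH[1] (ball x r ∩ frontier (stage 0)) := measure_mono hsub

lemma stage_lower : ∀ k : ℕ, ∀ x ∈ frontier (stage k), ∀ r : ℝ, 0 < r → r ≤ 2 →
    ENNReal.ofReal (r/2) ≤ μH[1] (ball x r ∩ frontier (stage k)) := by
  intro k
  induction k with
  | zero =>
    intro x hx r hr hr2
    rw [mem_frontier_stage_zero] at hx
    obtain ⟨hUC, hor⟩ := hx
    rcases hor with h | h | h | h
    · exact lower_vert x hUC (Or.inl h) hr hr2
    · exact lower_vert x hUC (Or.inr h) hr hr2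
    · exact lower_horiz x hUC (Or.inl h) hr hr2
    · exact lower_horiz x hUC (Or.inr h) hr hr2
  | succ k ih =>
    intro x hx r hr hr2
    rw [frontier_stage_succ, mem_iUnion] at hx
    obtain ⟨i, z, hz, rfl⟩ := hx
    rcases le_or_gt r (1/2) with hhalf | hhalf
    · have key : cornerMap i '' (ball z (4*r) ∩ frontier (stage k)) ⊆
          ball (cornerMap i z) r ∩ frontier (stage (k+1)) := by
        rw [cornerMap_image_ball_inter, show (4*r/4 : ℝ) = r by ring]
        apply Set.inter_subset_inter_right
        rw [frontier_stage_succ]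
        exact Set.subset_iUnion (fun j : Fin 4 => cornerMap j '' frontier (stage k)) i
      calc ENNReal.ofReal (r/2)
          = ENNReal.ofReal (1/4) * ENNReal.ofReal (4*r/2) := by
            rw [← ENNReal.ofReal_mul (by norm_num)]
            congr 1
            ring
        _ ≤ ENNReal.ofReal (1/4) * μH[1] (ball z (4*r) ∩ frontier (stage k)) := by
            gcongr
            exact ih z hz (4*r) (by linarith) (by linarith)
        _ = μH[1] (cornerMap i '' (ball z (4*r) ∩ frontier (stage k))) :=
            (cornerMap_hausdorff_image i _).symm
        _ ≤ μH[1] (ball (cornerMap i z) r ∩ frontier (stage (k+1))) := measure_mono key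
    · have key : cornerMap i '' frontier (stage k) ⊆
          ball (cornerMap i z) r ∩ frontier (stage (k+1)) := by
        rintro y ⟨w, hw, rfl⟩
        constructor
        · rw [mem_ball]
          have hd : dist (cornerMap i w) (cornerMap i z) = |1/4| * dist w z := by
            rw [cornerMap_eq, cornerHomeo_eq]
            exact affHomeo_dist _ _ _ _ w z
          have hwz : dist w z ≤ 1 :=
            UC_dist_le (frontier_stage_subset_UC k hw) (frontier_stage_subset_UC k hz)
          rw [show |(1/4:ℝ)| = 1/4 by norm_num] at hd
          linarith
        · rw [frontier_stage_succ]
          exact mem_iUnion.2 ⟨i, w, hw, rfl⟩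
      calc ENNReal.ofReal (r/2)
          ≤ ENNReal.ofReal (1/4) * ENNReal.ofReal 4 := by
            rw [← ENNReal.ofReal_mul (by norm_num)]
            exact ENNReal.ofReal_le_ofReal (by linarith)
        _ = ENNReal.ofReal (1/4) * μH[1] (frontier (stage k)) := by
            rw [measure_frontier_stage]
            norm_num
        _ = μH[1] (cornerMap i '' frontier (stage k)) :=
            (cornerMap_hausdorff_image i _).symm
        _ ≤ μH[1] (ball (cornerMap i z) r ∩ frontier (stage (k+1))) := measure_mono key

/-! ### Global frontier decomposition -/

def Tm (k : ℕ) : ℝ × ℝ → ℝ × ℝ := fun p => (p.1 + 2*(k:ℝ), p.2)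

lemma fourCornersDomain_eq : fourCornersDomain = ⋃ k : ℕ, Tm k '' stage k := rfl

lemma Tm_eq (k : ℕ) : Tm k = ⇑(affHomeo 1 (2*(k:ℝ)) 0 one_ne_zero) := by
  funext p
  simp only [Tm, affHomeo_apply, Prod.mk.injEq]
  constructor <;> ring

lemma Tm_isometry (k : ℕ) : Isometry (Tm k) :=
  Isometry.of_dist_eq (by
    intro p q
    simp only [Tm, Prod.dist_eq, Real.dist_eq]
    congr 2 <;> ring)

lemma Tm_H1 (k : ℕ) (s : Set (ℝ × ℝ)) : μH[1] (Tm k '' s) = μH[1] s :=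
  (Tm_isometry k).hausdorffMeasure_image (Or.inl zero_le_one) s

lemma Tm_inj (k : ℕ) : Function.Injective (Tm k) := (Tm_isometry k).injective

lemma dist_fst_le' (x y : ℝ × ℝ) : dist x.1 y.1 ≤ dist x y := by
  rw [Prod.dist_eq]; exact le_max_left _ _

lemma dist_snd_le' (x y : ℝ × ℝ) : dist x.2 y.2 ≤ dist x y := by
  rw [Prod.dist_eq]; exact le_max_right _ _

lemma Tm_stage_mem {k : ℕ} {w : ℝ × ℝ} (hw : w ∈ stage k) :
    2*(k:ℝ) < (Tm k w).1 ∧ (Tm k w).1 < 2*(k:ℝ)+1 ∧ 0 < (Tm k w).2 ∧ (Tm k w).2 < 1 := by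
  obtain ⟨⟨h1, h2⟩, h3, h4⟩ := stage_subset_USq k hw
  exact ⟨by simp [Tm]; linarith, by simp [Tm]; linarith, h3, h4⟩

lemma Tm_frontier_mem {k : ℕ} {w : ℝ × ℝ} (hw : w ∈ frontier (stage k)) :
    2*(k:ℝ) ≤ (Tm k w).1 ∧ (Tm k w).1 ≤ 2*(k:ℝ)+1 ∧ 0 ≤ (Tm k w).2 ∧ (Tm k w).2 ≤ 1 := by
  obtain ⟨⟨h1, h2⟩, h3, h4⟩ := frontier_stage_subset_UC k hw
  exact ⟨by simp [Tm]; linarith, by simp [Tm]; linarith, h3, h4⟩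

lemma isOpen_fourCornersDomain : IsOpen fourCornersDomain := by
  rw [fourCornersDomain_eq]
  apply isOpen_iUnion
  intro k
  rw [Tm_eq]
  exact (Homeomorph.isOpen_image _).2 (stage_isOpen k)

/-- distinct slabs are far apart in the first coordinate. -/
lemma slab_cases {k j : ℕ} (h : k ≠ j) : 2*(k:ℝ)+1 ≤ 2*(j:ℝ) - 1 ∨ 2*(j:ℝ)+1 ≤ 2*(k:ℝ) - 1 := by
  rcases lt_or_gt_of_ne h with h' | h'
  · left
    have : (k:ℝ) + 1 ≤ (j:ℝ) := by exact_mod_cast h'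
    linarith
  · right
    have : (j:ℝ) + 1 ≤ (k:ℝ) := by exact_mod_cast h'
    linarith

lemma frontier_fourCornersDomain_eq :
    frontier fourCornersDomain = ⋃ k : ℕ, Tm k '' frontier (stage k) := by
  have hopen := isOpen_fourCornersDomain
  have hclim : ∀ k : ℕ, closure (Tm k '' stage k) = Tm k '' closure (stage k) := by
    intro k
    rw [Tm_eq]
    exact ((affHomeo 1 (2*(k:ℝ)) 0 one_ne_zero).image_closure (stage k)).symm
  rw [hopen.frontier_eq]
  ext x
  simp only [mem_diff]
  constructor
  · rintro ⟨hxc, hxn⟩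
    -- Step 1: find the slab index
    have step1 : ∃ j : ℕ, 2*(j:ℝ) ≤ x.1 ∧ x.1 ≤ 2*(j:ℝ)+1 := by
      obtain ⟨y₀, hy₀Ω, hy₀⟩ : ∃ y₀ ∈ fourCornersDomain, dist x y₀ < 1/2 := by
        have := Metric.mem_closure_iff.1 hxc (1/2) (by norm_num)
        tauto
      rw [fourCornersDomain_eq, mem_iUnion] at hy₀Ω
      obtain ⟨k₀, w₀, hw₀, hwe⟩ := hy₀Ω
      have hy₀s := Tm_stage_mem hw₀
      rw [hwe] at hy₀s
      obtain ⟨hs1, hs2, _, _⟩ := hy₀s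
      have hfst : |x.1 - y₀.1| < 1/2 := by
        calc |x.1 - y₀.1| = dist x.1 y₀.1 := (Real.dist_eq _ _).symm
          _ ≤ dist x y₀ := dist_fst_le' x y₀
          _ < 1/2 := hy₀
      rw [abs_sub_lt_iff] at hfst
      by_cases hin : 2*(k₀:ℝ) ≤ x.1 ∧ x.1 ≤ 2*(k₀:ℝ)+1
      · exact ⟨k₀, hin⟩
      exfalso
      push_neg at hin
      rcases lt_or_ge x.1 (2*(k₀:ℝ)) with hA | hB
      · -- x.1 ∈ (2k₀ - 1/2, 2k₀)
        set δ := 2*(k₀:ℝ) - x.1 with hδ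
        have hδpos : 0 < δ := by linarith
        obtain ⟨y, hyΩ, hy⟩ : ∃ y ∈ fourCornersDomain, dist x y < δ := by
          have := Metric.mem_closure_iff.1 hxc δ hδpos
          tauto
        rw [fourCornersDomain_eq, mem_iUnion] at hyΩ
        obtain ⟨k, w, hw, hwe'⟩ := hyΩ
        have hys := Tm_stage_mem hw
        rw [hwe'] at hys
        obtain ⟨hk1, hk2, _, _⟩ := hys
        have hfst' : |x.1 - y.1| < δ := by
          calc |x.1 - y.1| = dist x.1 y.1 := (Real.dist_eq _ _).symm
            _ ≤ dist x y := dist_fst_le' x y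
            _ < δ := hy
        rw [abs_sub_lt_iff] at hfst'
        -- y.1 ∈ (2k₀ - 1, 2k₀)
        have hy1 : y.1 < 2*(k₀:ℝ) := by linarith [hfst'.2]
        have hy2 : 2*(k₀:ℝ) - 1 < y.1 := by linarith [hfst'.1, hfst.1]
        rcases eq_or_ne k k₀ with rfl | hkk
        · linarith
        · rcases slab_cases hkk with h | h <;> linarith
      · have hB' : 2*(k₀:ℝ)+1 < x.1 := hin hB
        set δ := x.1 - (2*(k₀:ℝ)+1) with hδ
        have hδpos : 0 < δ := by linarith
        obtain ⟨y, hyΩ, hy⟩ : ∃ y ∈ fourCornersDomain, dist x y < δ := by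
          have := Metric.mem_closure_iff.1 hxc δ hδpos
          tauto
        rw [fourCornersDomain_eq, mem_iUnion] at hyΩ
        obtain ⟨k, w, hw, hwe'⟩ := hyΩ
        have hys := Tm_stage_mem hw
        rw [hwe'] at hys
        obtain ⟨hk1, hk2, _, _⟩ := hys
        have hfst' : |x.1 - y.1| < δ := by
          calc |x.1 - y.1| = dist x.1 y.1 := (Real.dist_eq _ _).symm
            _ ≤ dist x y := dist_fst_le' x y
            _ < δ := hy
        rw [abs_sub_lt_iff] at hfst'
        have hy1 : 2*(k₀:ℝ)+1 < y.1 := by linarith [hfst'.1]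
        have hy2 : y.1 < 2*(k₀:ℝ)+2 := by linarith [hfst'.2, hfst.2]
        rcases eq_or_ne k k₀ with rfl | hkk
        · linarith
        · rcases slab_cases hkk with h | h <;> linarith
    obtain ⟨j, hj1, hj2⟩ := step1
    -- Step 2: x is in the closure of the j-th piece
    have step2 : x ∈ closure (Tm j '' stage j) := by
      rw [Metric.mem_closure_iff]
      intro ε hε
      obtain ⟨y, hyΩ, hy⟩ : ∃ y ∈ fourCornersDomain, dist x y < min ε (1/2) := by
        have := Metric.mem_closure_iff.1 hxc (min ε (1/2)) (by positivity)
        tauto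
      rw [fourCornersDomain_eq, mem_iUnion] at hyΩ
      obtain ⟨k, w, hw, hwe'⟩ := hyΩ
      have hys := Tm_stage_mem hw
      rw [hwe'] at hys
      obtain ⟨hk1, hk2, _, _⟩ := hys
      have hfst : |x.1 - y.1| < 1/2 := by
        calc |x.1 - y.1| = dist x.1 y.1 := (Real.dist_eq _ _).symm
          _ ≤ dist x y := dist_fst_le' x y
          _ < min ε (1/2) := hy
          _ ≤ 1/2 := min_le_right _ _
      rw [abs_sub_lt_iff] at hfst
      have hkj : k = j := by
        by_contra hkk
        rcases slab_cases hkk with h | h <;> linarith [hfst.1, hfst.2]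
      subst hkj
      exact ⟨y, ⟨w, hw, hwe'⟩, lt_of_lt_of_le hy (min_le_left _ _)⟩
    rw [mem_iUnion]
    refine ⟨j, ?_⟩
    rw [hclim j] at step2
    have hxnot : x ∉ Tm j '' stage j := fun hc =>
      hxn (by rw [fourCornersDomain_eq, mem_iUnion]; exact ⟨j, hc⟩)
    have : x ∈ Tm j '' (closure (stage j) \ stage j) := by
      rw [Set.image_diff (Tm_inj j)]
      exact ⟨step2, hxnot⟩
    rwa [← (stage_isOpen j).frontier_eq] at this
  · rintro hx
    rw [mem_iUnion] at hx
    obtain ⟨j, w, hw, rfl⟩ := hx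
    constructor
    · apply closure_mono (Set.subset_iUnion (fun k : ℕ => Tm k '' stage k) j)
      rw [hclim j]
      exact ⟨w, frontier_subset_closure hw, rfl⟩
    · rw [fourCornersDomain_eq, mem_iUnion]
      rintro ⟨k, v, hv, hve⟩
      rcases eq_or_ne k j with rfl | hkk
      · have : v = w := Tm_inj k hve
        subst this
        rw [(stage_isOpen k).frontier_eq] at hw
        exact hw.2 hv
      · have h1 := Tm_stage_mem hv
        rw [hve] at h1
        have h2 := Tm_frontier_mem hw
        rcases slab_cases hkk with h | h <;> linarith [h1.1, h1.2.1, h2.1, h2.2.1]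

/-! ### Global ADR bounds -/

lemma Tm_image_ball_inter (j : ℕ) (z : ℝ × ℝ) (R : ℝ) (s : Set (ℝ × ℝ)) :
    Tm j '' (ball z R ∩ s) = ball (Tm j z) R ∩ Tm j '' s := by
  rw [Tm_eq]
  have := affHomeo_image_ball_inter 1 (2*(j:ℝ)) 0 one_pos z R s
  rw [one_mul] at this
  exact this

lemma G_upper (j : ℕ) (x : ℝ × ℝ) (r : ℝ) (hr : 0 < r) :
    μH[1] (ball x r ∩ Tm j '' frontier (stage j)) ≤ ENNReal.ofReal (16*r) := by
  set z : ℝ × ℝ := (x.1 - 2*(j:ℝ), x.2) with hzdef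
  have hxz : Tm j z = x := by simp [Tm, hzdef]
  rw [← hxz, ← Tm_image_ball_inter, Tm_H1]
  exact stage_upper j z r hr

lemma G_measure (j : ℕ) : μH[1] (Tm j '' frontier (stage j)) = 4 := by
  rw [Tm_H1, measure_frontier_stage]

lemma G_le4 (j : ℕ) (x : ℝ × ℝ) (r : ℝ) :
    μH[1] (ball x r ∩ Tm j '' frontier (stage j)) ≤ 4 := by
  calc μH[1] (ball x r ∩ Tm j '' frontier (stage j))
      ≤ μH[1] (Tm j '' frontier (stage j)) := measure_mono Set.inter_subset_right
    _ = 4 := G_measure j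

lemma G_measurable (j : ℕ) : MeasurableSet (Tm j '' frontier (stage j)) :=
  (((isCompact_frontier_stage j).image (Tm_isometry j).continuous).isClosed).measurableSet

lemma global_upper (x : ℝ × ℝ) (r : ℝ) (hr : 0 < r) :
    μH[1] (ball x r ∩ frontier fourCornersDomain) ≤ ENNReal.ofReal (64 * r) := by
  rw [frontier_fourCornersDomain_eq, Set.inter_iUnion]
  set a : ℕ := ⌈(x.1 - r - 1)/2⌉₊ with ha
  set b : ℕ := ⌊(x.1 + r)/2⌋₊ with hb
  have hvanish : ∀ j : ℕ, j ∉ Finset.Icc a b →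
      μH[1] (ball x r ∩ Tm j '' frontier (stage j)) = 0 := by
    intro j hj
    rw [Finset.mem_Icc, not_and_or] at hj
    have hempty : ball x r ∩ Tm j '' frontier (stage j) = ∅ := by
      rw [Set.eq_empty_iff_forall_notMem]
      rintro p ⟨hpb, w, hw, rfl⟩
      have hcoords := Tm_frontier_mem hw
      have hfst : |(Tm j w).1 - x.1| < r := by
        calc |(Tm j w).1 - x.1| = dist (Tm j w).1 x.1 := (Real.dist_eq _ _).symm
          _ ≤ dist (Tm j w) x := dist_fst_le' _ _
          _ < r := mem_ball.1 hpb
      rw [abs_sub_lt_iff] at hfst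
      have hjb : j ≤ b := by
        apply Nat.le_floor
        have : 2*(j:ℝ) ≤ x.1 + r := by linarith [hcoords.1, hfst.1]
        linarith
      have hja : a ≤ j := by
        rw [ha]
        apply Nat.ceil_le.2
        have : x.1 - r ≤ 2*(j:ℝ) + 1 := by linarith [hcoords.2.1, hfst.2]
        linarith
      rcases hj with h | h
      · exact h hja
      · exact h hjb
    rw [hempty, measure_empty]
  have hcard : ((Finset.Icc a b).card : ℝ) ≤ r + 5/2 := by
    rcases le_or_gt a b with hab | hab
    · rw [Nat.card_Icc]
      rw [Nat.cast_sub (by omega)]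
      push_cast
      by_cases hpos : 0 ≤ (x.1 + r)/2
      · have h1 : (b:ℝ) ≤ (x.1 + r)/2 := Nat.floor_le hpos
        have h2 : (x.1 - r - 1)/2 ≤ (a:ℝ) := Nat.le_ceil _
        linarith
      · have hb0 : b = 0 := by
          rw [hb]
          exact Nat.floor_of_nonpos (by linarith)
        have ha0 : a = 0 := by omega
        rw [hb0, ha0]
        norm_num
        linarith
    · rw [Finset.Icc_eq_empty_of_lt hab]
      simp
      linarith
  calc μH[1] (⋃ j : ℕ, ball x r ∩ Tm j '' frontier (stage j))
      ≤ ∑' j : ℕ, μH[1] (ball x r ∩ Tm j '' frontier (stage j)) := measure_iUnion_le _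
    _ = ∑ j ∈ Finset.Icc a b, μH[1] (ball x r ∩ Tm j '' frontier (stage j)) :=
        tsum_eq_sum hvanish
    _ ≤ ∑ j ∈ Finset.Icc a b, min (ENNReal.ofReal (16*r)) 4 := by
        apply Finset.sum_le_sum
        intro j _
        exact le_min (G_upper j x r hr) (G_le4 j x r)
    _ = (Finset.Icc a b).card • min (ENNReal.ofReal (16*r)) 4 := Finset.sum_const _
    _ ≤ ENNReal.ofReal (64 * r) := by
        rw [nsmul_eq_mul]
        rcases le_or_gt r 2 with hr2 | hr2
        · have hc4 : (Finset.Icc a b).card ≤ 4 := by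
            have h5 : ((Finset.Icc a b).card : ℝ) < 5 := by linarith
            have h6 : (Finset.Icc a b).card < 5 := by exact_mod_cast h5
            omega
          calc ((Finset.Icc a b).card : ℝ≥0∞) * min (ENNReal.ofReal (16*r)) 4
              ≤ 4 * ENNReal.ofReal (16*r) := by
                gcongr
                · exact_mod_cast hc4
                · exact min_le_left _ _
            _ = ENNReal.ofReal (64 * r) := by
                rw [show ((4:ℝ≥0∞)) = ENNReal.ofReal 4 by norm_num,
                  ← ENNReal.ofReal_mul (by norm_num)]
                congr 1
                ring
        · calc ((Finset.Icc a b).card : ℝ≥0∞) * min (ENNReal.ofReal (16*r)) 4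
              ≤ ((Finset.Icc a b).card : ℝ≥0∞) * 4 := by
                gcongr
                exact min_le_right _ _
            _ = ENNReal.ofReal (((Finset.Icc a b).card : ℝ) * 4) := by
                rw [ENNReal.ofReal_mul (by positivity), ENNReal.ofReal_natCast]
                norm_num
            _ ≤ ENNReal.ofReal (64 * r) := by
                apply ENNReal.ofReal_le_ofReal
                nlinarith

lemma G_pairwise_disjoint {k j : ℕ} (h : k ≠ j) :
    Disjoint (Tm k '' frontier (stage k)) (Tm j '' frontier (stage j)) := by
  rw [Set.disjoint_left]
  rintro p ⟨w, hw, rfl⟩ ⟨v, hv, hve⟩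
  have h1 := Tm_frontier_mem hw
  have h2 := Tm_frontier_mem hv
  rw [hve] at h2
  rcases slab_cases h with hc | hc <;> linarith [h1.1, h1.2.1, h2.1, h2.2.1]

lemma global_lower (x : ℝ × ℝ) (hx : x ∈ frontier fourCornersDomain) (r : ℝ) (hr : 0 < r) :
    ENNReal.ofReal (r/4) ≤ μH[1] (ball x r ∩ frontier fourCornersDomain) := by
  rw [frontier_fourCornersDomain_eq] at hx ⊢
  rw [mem_iUnion] at hx
  obtain ⟨k, z, hz, rfl⟩ := hx
  rcases le_or_gt r 2 with hr2 | hr2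
  · -- small scale: use a single component
    have hmono : ball (Tm k z) r ∩ Tm k '' frontier (stage k) ⊆
        ball (Tm k z) r ∩ ⋃ j : ℕ, Tm j '' frontier (stage j) :=
      Set.inter_subset_inter_right _
        (Set.subset_iUnion (fun j : ℕ => Tm j '' frontier (stage j)) k)
    calc ENNReal.ofReal (r/4) ≤ ENNReal.ofReal (r/2) :=
          ENNReal.ofReal_le_ofReal (by linarith)
      _ ≤ μH[1] (ball z r ∩ frontier (stage k)) := stage_lower k z hz r hr hr2
      _ = μH[1] (Tm k '' (ball z r ∩ frontier (stage k))) := (Tm_H1 k _).symm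
      _ = μH[1] (ball (Tm k z) r ∩ Tm k '' frontier (stage k)) := by
          rw [Tm_image_ball_inter]
      _ ≤ μH[1] (ball (Tm k z) r ∩ ⋃ j : ℕ, Tm j '' frontier (stage j)) := measure_mono hmono
  · -- large scale: use ⌊r/2⌋ whole components
    have hfl1 : 1 ≤ ⌊r/2⌋₊ := Nat.le_floor (by push_cast; linarith)
    set m : ℕ := ⌊r/2⌋₊ - 1 with hm
    have hm1 : m + 1 = ⌊r/2⌋₊ := by omega
    have hmle : ((m:ℝ) + 1) ≤ r/2 := by
      have := Nat.floor_le (by positivity : (0:ℝ) ≤ r/2)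
      rw [← hm1] at this
      push_cast at this
      exact this
    have hz' := Tm_frontier_mem hz
    have hsub : ∀ t ∈ Finset.range (m+1),
        Tm (k+t) '' frontier (stage (k+t)) ⊆
          ball (Tm k z) r ∩ ⋃ j : ℕ, Tm j '' frontier (stage j) := by
      intro t ht
      rw [Finset.mem_range] at ht
      have htm : (t:ℝ) ≤ m := by exact_mod_cast Nat.lt_succ_iff.1 ht
      rintro p ⟨w, hw, rfl⟩
      have hw' := Tm_frontier_mem hw
      have hcast : 2*((k+t : ℕ):ℝ) = 2*(k:ℝ) + 2*(t:ℝ) := by push_cast; ring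
      constructor
      · rw [mem_ball, Prod.dist_eq]
        apply max_lt
        · rw [Real.dist_eq, abs_sub_lt_iff]
          constructor <;> rw [hcast] at hw' <;>
            [linarith [hw'.1, hw'.2.1, hz'.1, hz'.2.1]; linarith [hw'.1, hw'.2.1, hz'.1, hz'.2.1]]
        · rw [Real.dist_eq, abs_sub_lt_iff]
          constructor <;> linarith [hw'.2.2.1, hw'.2.2.2, hz'.2.2.1, hz'.2.2.2]
      · exact mem_iUnion.2 ⟨k+t, w, hw, rfl⟩
    have hdisjoint : ((Finset.range (m+1) : Finset ℕ) : Set ℕ).Pairwise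
        (Function.onFun Disjoint (fun t => Tm (k+t) '' frontier (stage (k+t)))) := by
      intro s _ t _ hst
      exact G_pairwise_disjoint (by omega)
    calc ENNReal.ofReal (r/4)
        ≤ ENNReal.ofReal (4*((m:ℝ)+1)) := by
          apply ENNReal.ofReal_le_ofReal
          rcases le_or_gt r 16 with h16 | h16
          · have : (1:ℝ) ≤ (m:ℝ) + 1 := by
              have : (0:ℝ) ≤ (m:ℝ) := Nat.cast_nonneg m
              linarith
            linarith
          · have hge : r/2 - 1 ≤ (m:ℝ) + 1 := by
              have := Nat.lt_floor_add_one (r/2)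
              rw [← hm1] at this
              push_cast at this
              linarith
            linarith
      _ = ((m+1 : ℕ) : ℝ≥0∞) * 4 := by
          rw [show ((4:ℝ≥0∞)) = ENNReal.ofReal 4 by norm_num]
          rw [← ENNReal.ofReal_natCast, ← ENNReal.ofReal_mul (by positivity)]
          congr 1
          push_cast
          ring
      _ = ∑ t ∈ Finset.range (m+1), μH[1] (Tm (k+t) '' frontier (stage (k+t))) := by
          rw [Finset.sum_congr rfl (fun t _ => G_measure (k+t)), Finset.sum_const,
            Finset.card_range, nsmul_eq_mul]
      _ = μH[1] (⋃ t ∈ Finset.range (m+1), Tm (k+t) '' frontier (stage (k+t))) :=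
          (measure_biUnion_finset hdisjoint (fun t _ => G_measurable (k+t))).symm
      _ ≤ μH[1] (ball (Tm k z) r ∩ ⋃ j : ℕ, Tm j '' frontier (stage j)) := by
          apply measure_mono
          exact Set.iUnion₂_subset hsub

/-- The boundary of the 4-corners example domain is 1-dimensional Ahlfors–David regular:
`c r ≤ H^1(B(x,r) ∩ ∂Ω) ≤ C r` for all `x ∈ ∂Ω` and `0 < r < diam ∂Ω`. -/
theorem fourCorners_boundary_ADR :
    ∃ c C : ℝ, 0 < c ∧ c ≤ C ∧
      ∀ x ∈ frontier fourCornersDomain, ∀ r : ℝ, 0 < r →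
        ENNReal.ofReal r < EMetric.diam (frontier fourCornersDomain) →
        ENNReal.ofReal (c * r) ≤ μH[1] (Metric.ball x r ∩ frontier fourCornersDomain) ∧
          μH[1] (Metric.ball x r ∩ frontier fourCornersDomain) ≤ ENNReal.ofReal (C * r) := by
  refine ⟨1/4, 64, by norm_num, by norm_num, ?_⟩
  intro x hx r hr _
  constructor
  · rw [show (1/4 : ℝ) * r = r/4 by ring]
    exact global_lower x hx r hr
  · exact global_upper x r hr
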